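/- If Eve wins a generalized reachability game with k reachability sets from v0, then she has a winning strategy under which every consistent play visits all k reachability sets within the first n·k steps, where n is the number of vertices. -/

import Mathlib

/-- An arena: a directed graph with every vertex having a successor,
and a partition of vertices between Eve (`eve v`) and Adam (`¬ eve v`). -/
structure Arena (V : Type) where
  E : V → V → Prop
  eve : V → Prop
  succ_exists : ∀ v, ∃ w, E v w

variable {V M : Type}

/-- A play from `v0`: an infinite path starting at `v0`. -/
def IsPlay (A : Arena V) (v0 : V) (π : ℕ → V) : Prop :=
  π 0 = v0 ∧ ∀ n, A.E (π n) (π (n + 1))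

/-- The finite history of a play up to time `n` (inclusive). -/
def hist (π : ℕ → V) (n : ℕ) : List V :=
  List.ofFn (fun i : Fin (n + 1) => π i)

/-- A strategy (a function from histories to vertices) is legal if it always moves along edges. -/
def Legal (A : Arena V) (σ : List V → V) : Prop :=
  ∀ (l : List V) (v : V), A.E v (σ (l ++ [v]))

/-- A play is consistent with Eve's strategy `σ`. -/
def ConsistentEve (A : Arena V) (σ : List V → V) (π : ℕ → V) : Prop :=
  ∀ n, A.eve (π n) → π (n + 1) = σ (hist π n)

/-- A play is consistent with Adam's strategy `τ`. -/
def ConsistentAdam (A : Arena V) (τ : List V → V) (π : ℕ → V) : Prop :=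
  ∀ n, ¬ A.eve (π n) → π (n + 1) = τ (hist π n)

/-- The generalized reachability objective: visit each `F i` at least once. -/
def GenReach {k : ℕ} (F : Fin k → Set V) (π : ℕ → V) : Prop :=
  ∀ i, ∃ n, π n ∈ F i

/-- Eve wins the generalized reachability game from `v0`. -/
def EveWinsGenReach {k : ℕ} (A : Arena V) (F : Fin k → Set V) (v0 : V) : Prop :=
  ∃ σ, Legal A σ ∧ ∀ π, IsPlay A v0 π → ConsistentEve A σ π → GenReach F π

/-- Adam wins the generalized reachability game from `v0`. -/
def AdamWinsGenReach {k : ℕ} (A : Arena V) (F : Fin k → Set V) (v0 : V) : Prop :=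
  ∃ τ, Legal A τ ∧ ∀ π, IsPlay A v0 π → ConsistentAdam A τ π → ¬ GenReach F π

/-- One step of the attractor computation. -/
def AttrStep (A : Arena V) (X : Set V) : Set V :=
  X ∪ {u | A.eve u ∧ ∃ v, A.E u v ∧ v ∈ X} ∪ {u | ¬ A.eve u ∧ ∀ v, A.E u v → v ∈ X}

/-- The attractor sequence `Attr_i(F)`. -/
def AttrSeq (A : Arena V) (F : Set V) : ℕ → Set V
  | 0 => F
  | n + 1 => AttrStep A (AttrSeq A F n)

/-- The attractor `Attr(F)`: union of the attractor sequence. -/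
def Attr (A : Arena V) (F : Set V) : Set V := ⋃ n, AttrSeq A F n

/-- A memory structure: initial memory state and update function on edges. -/
structure MemStruct (V M : Type) where
  m0 : M
  upd : M → V → V → M

/-- The sequence of memory states along a play. -/
def memTrace (μ : MemStruct V M) (π : ℕ → V) : ℕ → M
  | 0 => μ.m0
  | n + 1 => μ.upd (memTrace μ π n) (π n) (π (n + 1))

/-- A next-move function is legal if it always moves along edges. -/
def MemLegal (A : Arena V) (ν : V → M → V) : Prop :=
  ∀ v m, A.E v (ν v m)

/-- Consistency of a play with Eve's finite-memory strategy `(μ, ν)`. -/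
def MemConsistentEve (A : Arena V) (μ : MemStruct V M) (ν : V → M → V) (π : ℕ → V) : Prop :=
  ∀ n, A.eve (π n) → π (n + 1) = ν (π n) (memTrace μ π n)

/-- Consistency of a play with Adam's finite-memory strategy `(μ, ν)`. -/
def MemConsistentAdam (A : Arena V) (μ : MemStruct V M) (ν : V → M → V) (π : ℕ → V) : Prop :=
  ∀ n, ¬ A.eve (π n) → π (n + 1) = ν (π n) (memTrace μ π n)

/-- Eve wins with the finite-memory strategy `(μ, ν)` from `v0`. -/
def EveWinsWithMem {k : ℕ} (A : Arena V) (F : Fin k → Set V) (v0 : V)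
    (μ : MemStruct V M) (ν : V → M → V) : Prop :=
  MemLegal A ν ∧ ∀ π, IsPlay A v0 π → MemConsistentEve A μ ν π → GenReach F π

/-- Adam wins with the finite-memory strategy `(μ, ν)` from `v0`. -/
def AdamWinsWithMem {k : ℕ} (A : Arena V) (F : Fin k → Set V) (v0 : V)
    (μ : MemStruct V M) (ν : V → M → V) : Prop :=
  MemLegal A ν ∧ ∀ π, IsPlay A v0 π → MemConsistentAdam A μ ν π → ¬ GenReach F π



open scoped Classical

section Aux

variable {k : ℕ}

/-- Pick a successor of `w` satisfying `P` if one exists, otherwise any successor. -/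
noncomputable def pick (A : Arena V) (w : V) (P : V → Prop) : V :=
  if h : ∃ w', A.E w w' ∧ P w' then h.choose else (A.succ_exists w).choose

lemma pick_edge (A : Arena V) (w : V) (P : V → Prop) : A.E w (pick A w P) := by
  unfold pick
  split
  · next h => exact h.choose_spec.1
  · exact (A.succ_exists w).choose_spec

lemma pick_spec (A : Arena V) (w : V) (P : V → Prop) (h : ∃ w', A.E w w' ∧ P w') :
    P (pick A w P) := by
  unfold pick
  rw [dif_pos h]
  exact h.choose_spec.2

/-- Eve wins the reachability objective restricted to the index set `S`. -/
def WinS (A : Arena V) (F : Fin k → Set V) (S : Finset (Fin k)) (v : V) : Prop :=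
  ∃ σ, Legal A σ ∧ ∀ π, IsPlay A v π → ConsistentEve A σ π → ∀ i ∈ S, ∃ n, π n ∈ F i

lemma winS_anti (A : Arena V) (F : Fin k → Set V) {S S' : Finset (Fin k)} (hss : S' ⊆ S)
    {v : V} (h : WinS A F S v) : WinS A F S' v := by
  obtain ⟨σ, hL, hW⟩ := h
  exact ⟨σ, hL, fun π h1 h2 i hi => hW π h1 h2 i (hss hi)⟩

/-- The target set: positions in some `F i` (for `i ∈ S`) from which Eve can win
the residual objective. -/
def Tgt (A : Arena V) (F : Fin k → Set V) (S : Finset (Fin k)) : Set V :=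
  ⋃ i ∈ S, F i ∩ {v | WinS A F (S.erase i) v}

/- ### Basic attractor lemmas -/

lemma subset_attrStep (A : Arena V) (X : Set V) : X ⊆ AttrStep A X :=
  fun _ hv => Or.inl (Or.inl hv)

lemma attrStep_mono (A : Arena V) {X Y : Set V} (h : X ⊆ Y) : AttrStep A X ⊆ AttrStep A Y := by
  rintro v (( hv | hv) | hv)
  · exact Or.inl (Or.inl (h hv))
  · exact Or.inl (Or.inr ⟨hv.1, hv.2.choose, hv.2.choose_spec.1, h hv.2.choose_spec.2⟩)
  · exact Or.inr ⟨hv.1, fun w hw => h (hv.2 w hw)⟩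

lemma attrSeq_le_succ (A : Arena V) (X : Set V) (n : ℕ) :
    AttrSeq A X n ⊆ AttrSeq A X (n + 1) :=
  subset_attrStep A _

lemma attrSeq_mono (A : Arena V) (X : Set V) {m n : ℕ} (h : m ≤ n) :
    AttrSeq A X m ⊆ AttrSeq A X n := by
  induction n with
  | zero => simpa [Nat.le_zero.mp h]
  | succ n ih =>
      rcases Nat.lt_or_ge m (n + 1) with h' | h'
      · exact (ih (Nat.lt_succ_iff.mp h')).trans (attrSeq_le_succ A X n)
      · have : m = n + 1 := le_antisymm h h'
        simp [this]

lemma attrSeq_subset_attr (A : Arena V) (X : Set V) (n : ℕ) :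
    AttrSeq A X n ⊆ Attr A X :=
  Set.subset_iUnion (fun n => AttrSeq A X n) n

/-- Stabilization of the attractor sequence at `Fintype.card V`. -/
lemma attr_subset_attrSeq_card [Fintype V] (A : Arena V) (X : Set V) :
    Attr A X ⊆ AttrSeq A X (Fintype.card V) := by
  classical
  -- first find a stabilization point `N ≤ card V`
  have hstab : ∃ N ≤ Fintype.card V, AttrSeq A X N = AttrSeq A X (N + 1) := by
    by_contra hcon
    push_neg at hcon
    have key : ∀ n, (∀ N < n, AttrSeq A X N ≠ AttrSeq A X (N + 1)) →
        n ≤ (AttrSeq A X n).ncard := by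
      intro n
      induction n with
      | zero => intro _; exact Nat.zero_le _
      | succ n ih =>
          intro hn
          have h1 : n ≤ (AttrSeq A X n).ncard := ih (fun N hN => hn N (hN.trans (Nat.lt_succ_self n)))
          have h2 : (AttrSeq A X n).ncard < (AttrSeq A X (n + 1)).ncard := by
            apply Set.ncard_lt_ncard
            · exact ssubset_of_subset_of_ne (attrSeq_le_succ A X n) (hn n (Nat.lt_succ_self n))
            · exact Set.toFinite _
          omega
    have h1 : Fintype.card V + 1 ≤ (AttrSeq A X (Fintype.card V + 1)).ncard := by
      apply key
      intro N hN
      exact hcon N (Nat.lt_succ_iff.mp hN)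
    have h2 : (AttrSeq A X (Fintype.card V + 1)).ncard ≤ Fintype.card V := by
      have := Set.ncard_le_ncard (Set.subset_univ (AttrSeq A X (Fintype.card V + 1)))
        (Set.toFinite _)
      simpa [Set.ncard_univ, Nat.card_eq_fintype_card] using this
    omega
  obtain ⟨N, hNle, hNeq⟩ := hstab
  have hstable : ∀ m, AttrSeq A X m ⊆ AttrSeq A X N := by
    intro m
    induction m with
    | zero => exact attrSeq_mono A X (Nat.zero_le N)
    | succ m ih =>
        rcases Nat.lt_or_ge m N with h' | h'
        · exact attrSeq_mono A X h'
        · calc AttrSeq A X (m + 1) = AttrStep A (AttrSeq A X m) := rfl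
            _ ⊆ AttrStep A (AttrSeq A X N) := attrStep_mono A ih
            _ = AttrSeq A X N := hNeq.symm
  intro v hv
  obtain ⟨s, hs⟩ := Set.mem_iUnion.mp hv
  exact attrSeq_mono A X hNle (hstable s hs)

lemma attrStep_attr_subset [Fintype V] (A : Arena V) (X : Set V) :
    AttrStep A (Attr A X) ⊆ Attr A X := by
  intro v hv
  have h := attrStep_mono A (attr_subset_attrSeq_card A X) hv
  exact attrSeq_subset_attr A X (Fintype.card V + 1) h

lemma attr_subset_attr [Fintype V] (A : Arena V) {X Y : Set V} (h : X ⊆ Attr A Y) :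
    Attr A X ⊆ Attr A Y := by
  suffices h2 : ∀ n, AttrSeq A X n ⊆ Attr A Y by
    intro v hv
    obtain ⟨n, hn⟩ := Set.mem_iUnion.mp hv
    exact h2 n hn
  intro n
  induction n with
  | zero => exact h
  | succ n ih =>
      intro v hv
      exact attrStep_attr_subset A Y (attrStep_mono A ih hv)

/- ### Rank -/

/-- The attractor rank of a vertex. -/
noncomputable def rk (A : Arena V) (X : Set V) (w : V) : ℕ :=
  sInf {n | w ∈ AttrSeq A X n}

lemma mem_attrSeq_rk (A : Arena V) {X : Set V} {w : V} (h : w ∈ Attr A X) :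
    w ∈ AttrSeq A X (rk A X w) :=
  Nat.sInf_mem (Set.mem_iUnion.mp h)

lemma rk_le (A : Arena V) {X : Set V} {w : V} {n : ℕ} (h : w ∈ AttrSeq A X n) :
    rk A X w ≤ n :=
  Nat.sInf_le h

lemma rk_le_card [Fintype V] (A : Arena V) {X : Set V} {w : V} (h : w ∈ Attr A X) :
    rk A X w ≤ Fintype.card V :=
  rk_le A (attr_subset_attrSeq_card A X h)

lemma rk_pos (A : Arena V) {X : Set V} {w : V} (h : w ∈ Attr A X) (h0 : w ∉ X) :
    1 ≤ rk A X w := by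
  have hmem := mem_attrSeq_rk A h
  rcases Nat.eq_zero_or_pos (rk A X w) with h' | h'
  · rw [h'] at hmem
    exact absurd hmem h0
  · exact h'

lemma not_mem_attrSeq_pred (A : Arena V) {X : Set V} {w : V} (h1 : 1 ≤ rk A X w) :
    w ∉ AttrSeq A X (rk A X w - 1) := by
  intro hmem
  have := rk_le A hmem
  omega

/- ### Histories -/

lemma hist_succ (π : ℕ → V) (n : ℕ) : hist π (n + 1) = hist π n ++ [π (n + 1)] := by
  unfold hist
  rw [List.ofFn_succ' (fun i : Fin (n + 2) => π i), List.concat_eq_append]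
  simp only [Fin.coe_castSucc, Fin.val_last]

lemma hist_zero (π : ℕ → V) : hist π 0 = [π 0] := by
  simp [hist]

lemma hist_ne_nil (π : ℕ → V) (n : ℕ) : hist π n ≠ [] := by
  cases n with
  | zero => simp [hist_zero]
  | succ n => simp [hist_succ]

lemma hist_getLast? (π : ℕ → V) (n : ℕ) : (hist π n).getLast? = some (π n) := by
  cases n with
  | zero => simp [hist_zero]
  | succ n => rw [hist_succ]; exact List.getLast?_concat

lemma mem_hist {π : ℕ → V} {n : ℕ} {u : V} : u ∈ hist π n ↔ ∃ m ≤ n, π m = u := by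
  simp only [hist, List.mem_ofFn, Set.mem_range]
  constructor
  · rintro ⟨i, rfl⟩; exact ⟨i, Nat.lt_succ_iff.mp i.isLt, rfl⟩
  · rintro ⟨m, hm, rfl⟩; exact ⟨⟨m, Nat.lt_succ_iff.mpr hm⟩, rfl⟩

lemma self_mem_hist (π : ℕ → V) (n : ℕ) : π n ∈ hist π n :=
  mem_hist.mpr ⟨n, le_refl n, rfl⟩

lemma hist_ext {π ρ : ℕ → V} {n : ℕ} (h : ∀ t ≤ n, π t = ρ t) : hist π n = hist ρ n := by
  unfold hist
  congr 1
  funext i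
  exact h i (Nat.lt_succ_iff.mp i.isLt)

lemma hist_shift (π : ℕ → V) (m n : ℕ) :
    hist π (m + n) = (hist π m).dropLast ++ hist (fun t => π (m + t)) n := by
  induction n with
  | zero =>
      have h := List.dropLast_append_getLast (hist_ne_nil π m)
      have h2 : (hist π m).getLast (hist_ne_nil π m) = π m := by
        have := hist_getLast? π m
        rw [List.getLast?_eq_getLast (hist_ne_nil π m)] at this
        exact Option.some_injective _ this
      rw [hist_zero]
      simp only [Nat.add_zero]
      conv_lhs => rw [← h]
      rw [h2]
  | succ n ih =>
      have e : m + (n + 1) = (m + n) + 1 := rfl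
      rw [e, hist_succ, ih, hist_succ, List.append_assoc]
      rfl

/- ### Building a play from two strategies -/

/-- The next vertex, following `σ` at Eve's vertices and `τ` at Adam's. -/
noncomputable def nextv (A : Arena V) (σ τ : List V → V) (v0 : V) (l : List V) : V :=
  if A.eve (l.getLast?.getD v0) then σ l else τ l

/-- Successive histories of the play following `σ` and `τ` from `v0`. -/
noncomputable def histL (A : Arena V) (σ τ : List V → V) (v0 : V) : ℕ → List V
  | 0 => [v0]
  | n + 1 => histL A σ τ v0 n ++ [nextv A σ τ v0 (histL A σ τ v0 n)]

/-- The play following `σ` and `τ` from `v0`. -/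
noncomputable def playOf (A : Arena V) (σ τ : List V → V) (v0 : V) (n : ℕ) : V :=
  (histL A σ τ v0 n).getLast?.getD v0

lemma playOf_hist (A : Arena V) (σ τ : List V → V) (v0 : V) (n : ℕ) :
    hist (playOf A σ τ v0) n = histL A σ τ v0 n := by
  induction n with
  | zero => simp [hist_zero, playOf, histL]
  | succ n ih =>
      rw [hist_succ, ih]
      show _ = histL A σ τ v0 (n+1)
      rw [show histL A σ τ v0 (n+1) = histL A σ τ v0 n ++ [nextv A σ τ v0 (histL A σ τ v0 n)] from rfl]
      congr 1
      simp [playOf, show histL A σ τ v0 (n+1) = histL A σ τ v0 n ++ [nextv A σ τ v0 (histL A σ τ v0 n)] from rfl,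
        List.getLast?_concat]

lemma playOf_zero (A : Arena V) (σ τ : List V → V) (v0 : V) : playOf A σ τ v0 0 = v0 := by
  simp [playOf, histL]

lemma playOf_succ (A : Arena V) (σ τ : List V → V) (v0 : V) (n : ℕ) :
    playOf A σ τ v0 (n + 1) = nextv A σ τ v0 (hist (playOf A σ τ v0) n) := by
  rw [playOf_hist]
  simp [playOf, show histL A σ τ v0 (n+1) = histL A σ τ v0 n ++ [nextv A σ τ v0 (histL A σ τ v0 n)] from rfl,
    List.getLast?_concat]

lemma playOf_isPlay (A : Arena V) {σ τ : List V → V} (hσ : Legal A σ) (hτ : Legal A τ)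
    (v0 : V) : IsPlay A v0 (playOf A σ τ v0) := by
  refine ⟨playOf_zero A σ τ v0, fun n => ?_⟩
  rw [playOf_succ]
  set π := playOf A σ τ v0
  have hne := hist_ne_nil π n
  have hlast : (hist π n).getLast hne = π n := by
    have := hist_getLast? π n
    rw [List.getLast?_eq_getLast hne] at this
    exact Option.some_injective _ this
  have hdecomp : (hist π n).dropLast ++ [π n] = hist π n := by
    rw [← hlast]; exact List.dropLast_append_getLast hne
  unfold nextv
  rw [hist_getLast? π n]
  split
  · rw [← hdecomp]; exact hσ _ _
  · rw [← hdecomp]; exact hτ _ _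

lemma playOf_consistentEve (A : Arena V) (σ τ : List V → V) (v0 : V) :
    ConsistentEve A σ (playOf A σ τ v0) := by
  intro n he
  rw [playOf_succ]
  unfold nextv
  rw [hist_getLast? (playOf A σ τ v0) n]
  simp only [Option.getD_some]
  rw [if_pos he]

lemma playOf_consistentAdam (A : Arena V) (σ τ : List V → V) (v0 : V) :
    ConsistentAdam A τ (playOf A σ τ v0) := by
  intro n he
  rw [playOf_succ]
  unfold nextv
  rw [hist_getLast? (playOf A σ τ v0) n]
  simp only [Option.getD_some]
  rw [if_neg he]

/- ### Residual strategies -/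

lemma residual_winS (A : Arena V) (F : Fin k → Set V) (S : Finset (Fin k)) {v0 : V}
    {σ : List V → V} (hσL : Legal A σ)
    (hσW : ∀ π, IsPlay A v0 π → ConsistentEve A σ π → ∀ i ∈ S, ∃ n, π n ∈ F i)
    {π : ℕ → V} (hπ : IsPlay A v0 π) (hc : ConsistentEve A σ π) (m : ℕ)
    (hmin : ∀ t < m, ∀ i ∈ S, π t ∉ F i) {i : Fin k} (hi : i ∈ S) :
    WinS A F (S.erase i) (π m) := by
  refine ⟨fun l => σ ((hist π m).dropLast ++ l), ?_, ?_⟩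
  · intro l v
    show A.E v (σ ((hist π m).dropLast ++ (l ++ [v])))
    rw [← List.append_assoc]
    exact hσL _ v
  · intro π' hπ' hc' j hj
    rw [Finset.mem_erase] at hj
    -- combined play
    set π'' : ℕ → V := fun t => if t < m then π t else π' (t - m) with hπ''def
    have e1 : ∀ t ≤ m, π'' t = π t := by
      intro t ht
      rcases Nat.lt_or_ge t m with h' | h'
      · simp [hπ''def, h']
      · have : t = m := le_antisymm ht h'
        subst this
        simp [hπ''def, hπ'.1]
    have e2 : ∀ t, π'' (m + t) = π' t := by
      intro t
      simp [hπ''def]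
    have hplay : IsPlay A v0 π'' := by
      constructor
      · rw [e1 0 (Nat.zero_le m)]; exact hπ.1
      · intro t
        rcases Nat.lt_or_ge t m with h' | h'
        · rw [e1 t (le_of_lt h'), e1 (t + 1) h']
          exact hπ.2 t
        · obtain ⟨s, rfl⟩ := Nat.exists_eq_add_of_le h'
          rw [e2 s, show m + s + 1 = m + (s + 1) from rfl, e2 (s + 1)]
          exact hπ'.2 s
    have hhist1 : ∀ t ≤ m, hist π'' t = hist π t := by
      intro t ht
      exact hist_ext (fun u hu => e1 u (hu.trans ht))
    have hhist2 : ∀ t, hist π'' (m + t) = (hist π m).dropLast ++ hist π' t := by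
      intro t
      rw [hist_shift π'' m t, hhist1 m (le_refl m)]
      congr 1
      exact hist_ext (fun u _ => e2 u)
    have hcons : ConsistentEve A σ π'' := by
      intro t he
      rcases Nat.lt_or_ge t m with h' | h'
      · rw [e1 (t + 1) h', hhist1 t (le_of_lt h')]
        rw [e1 t (le_of_lt h')] at he
        exact hc t he
      · obtain ⟨s, rfl⟩ := Nat.exists_eq_add_of_le h'
        rw [show m + s + 1 = m + (s + 1) from rfl, e2 (s + 1), hhist2 s]
        rw [e2 s] at he
        exact hc' s he
    obtain ⟨n, hn⟩ := hσW π'' hplay hcons j hj.2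
    rcases Nat.lt_or_ge n m with h' | h'
    · rw [e1 n (le_of_lt h')] at hn
      exact absurd hn (hmin n h' j hj.2)
    · obtain ⟨s, rfl⟩ := Nat.exists_eq_add_of_le h'
      rw [e2 s] at hn
      exact ⟨s, hn⟩

/- ### The progress lemma -/

lemma progress [Fintype V] (A : Arena V) (F : Fin k → Set V) {S : Finset (Fin k)}
    (hS : S.Nonempty) {v : V} (hv : WinS A F S v) : v ∈ Attr A (Tgt A F S) := by
  by_contra hvA
  set X := Tgt A F S with hX
  obtain ⟨σ, hσL, hσW⟩ := hv
  -- Adam's trap strategy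
  set τ : List V → V := fun l => pick A (l.getLast?.getD v) (fun w' => w' ∉ Attr A X) with hτdef
  have hτL : Legal A τ := by
    intro l w
    have : (l ++ [w]).getLast?.getD v = w := by rw [List.getLast?_concat]; rfl
    simp only [hτdef, this]
    exact pick_edge A w _
  set π := playOf A σ τ v with hπdef
  have hπP : IsPlay A v π := playOf_isPlay A hσL hτL v
  have hπE : ConsistentEve A σ π := playOf_consistentEve A σ τ v
  have hπA : ConsistentAdam A τ π := playOf_consistentAdam A σ τ v
  -- the play stays outside the attractor
  have hout : ∀ n, π n ∉ Attr A X := by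
    intro n
    induction n with
    | zero => rw [hπP.1]; exact hvA
    | succ n ih =>
        by_cases he : A.eve (π n)
        · intro hmem
          apply ih
          have h1 : π (n + 1) ∈ AttrSeq A X (Fintype.card V) :=
            attr_subset_attrSeq_card A X hmem
          apply attrSeq_subset_attr A X (Fintype.card V + 1)
          exact Or.inl (Or.inr ⟨he, π (n + 1), hπP.2 n, h1⟩)
        · have hstep : π (n + 1) = τ (hist π n) := hπA n he
          have hlastd : (hist π n).getLast?.getD v = π n := by
            rw [hist_getLast? π n]; rfl
          have hex : ∃ w', A.E (π n) w' ∧ w' ∉ Attr A X := by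
            by_contra hcon
            push_neg at hcon
            apply ih
            apply attrSeq_subset_attr A X (Fintype.card V + 1)
            exact Or.inr ⟨he, fun w hw => attr_subset_attrSeq_card A X (hcon w hw)⟩
          rw [hstep]
          simp only [hτdef, hlastd]
          exact pick_spec A (π n) _ hex
  -- but the play must reach the target
  obtain ⟨i0, hi0⟩ := hS
  obtain ⟨n0, hn0⟩ := hσW π hπP hπE i0 hi0
  set D : Set ℕ := {n | ∃ i ∈ S, π n ∈ F i} with hD
  have hDne : D.Nonempty := ⟨n0, i0, hi0, hn0⟩
  set m := sInf D with hm
  obtain ⟨i, hiS, hiF⟩ : ∃ i ∈ S, π m ∈ F i := Nat.sInf_mem hDne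
  have hmin : ∀ t < m, ∀ j ∈ S, π t ∉ F j := by
    intro t ht j hjS hjF
    exact Nat.notMem_of_lt_sInf ht ⟨j, hjS, hjF⟩
  have hwin : WinS A F (S.erase i) (π m) :=
    residual_winS A F S hσL hσW hπP hπE m hmin hiS
  have : π m ∈ Tgt A F S := by
    rw [Tgt]
    exact Set.mem_biUnion hiS ⟨hiF, hwin⟩
  exact hout m (attrSeq_subset_attr A X 0 this)

lemma attr_tgt_anti [Fintype V] (A : Arena V) (F : Fin k → Set V)
    {S S' : Finset (Fin k)} (hss : S' ⊆ S) (hne : S'.Nonempty) :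
    Attr A (Tgt A F S) ⊆ Attr A (Tgt A F S') := by
  apply attr_subset_attr
  intro v hv
  rw [Tgt] at hv
  obtain ⟨i, hiS, hiF, hiW⟩ := by
    simpa only [Set.mem_iUnion, Set.mem_inter_iff, Set.mem_setOf_eq, exists_prop] using hv
  by_cases hi' : i ∈ S'
  · apply attrSeq_subset_attr A _ 0
    rw [Tgt]
    exact Set.mem_biUnion hi' ⟨hiF, winS_anti A F (Finset.erase_subset_erase i hss) hiW⟩
  · have hsub : S' ⊆ S.erase i := fun j hj =>
      Finset.mem_erase.mpr ⟨fun hji => hi' (hji ▸ hj), hss hj⟩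
    exact progress A F hne (winS_anti A F hsub hiW)

/- ### The remaining index set and Eve's global strategy -/

/-- The set of indices not yet visited along a history. -/
noncomputable def remS (F : Fin k → Set V) (l : List V) : Finset (Fin k) :=
  Finset.univ.filter (fun i => ∀ u ∈ l, u ∉ F i)

lemma mem_remS {F : Fin k → Set V} {l : List V} {i : Fin k} :
    i ∈ remS F l ↔ ∀ u ∈ l, u ∉ F i := by
  simp [remS]

/-- Eve's global strategy: attract towards the target of the remaining indices. -/
noncomputable def sstar (A : Arena V) (F : Fin k → Set V) (v0 : V) : List V → V :=
  fun l =>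
    pick A (l.getLast?.getD v0)
      (fun w' => w' ∈ AttrSeq A (Tgt A F (remS F l))
        (rk A (Tgt A F (remS F l)) (l.getLast?.getD v0) - 1))

lemma sstar_legal (A : Arena V) (F : Fin k → Set V) (v0 : V) : Legal A (sstar A F v0) := by
  intro l w
  unfold sstar
  have : (l ++ [w]).getLast?.getD v0 = w := by rw [List.getLast?_concat]; rfl
  rw [this]
  exact pick_edge A w _

end Aux

/-- if Eve wins a generalized reachability game with `k` sets, she has a
winning strategy under which every consistent play visits all sets within `n·k` steps. -/
theorem eveWins_genReach_bounded_steps {V : Type} [Fintype V] {k : ℕ}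
    (A : Arena V) (F : Fin k → Set V) (v0 : V)
    (h : EveWinsGenReach A F v0) :
    ∃ σ, Legal A σ ∧ ∀ π, IsPlay A v0 π → ConsistentEve A σ π →
      ∀ i, ∃ m ≤ Fintype.card V * k, π m ∈ F i := by
  classical
  obtain ⟨σ0, hσ0L, hσ0W⟩ := h
  have hwin0 : WinS A F Finset.univ v0 :=
    ⟨σ0, hσ0L, fun π h1 h2 i _ => hσ0W π h1 h2 i⟩
  refine ⟨sstar A F v0, sstar_legal A F v0, ?_⟩
  intro π hπ hc i
  -- remaining indices shrink along the play
  have hsub : ∀ n, remS F (hist π (n + 1)) ⊆ remS F (hist π n) := by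
    intro n j hj
    rw [mem_remS] at hj ⊢
    intro u hu
    exact hj u (by rw [hist_succ]; exact List.mem_append_left _ hu)
  have hnotF : ∀ n, ∀ j ∈ remS F (hist π n), π n ∉ F j := by
    intro n j hj
    exact (mem_remS.mp hj) (π n) (self_mem_hist π n)
  have hnotTgt : ∀ n, π n ∉ Tgt A F (remS F (hist π n)) := by
    intro n hmem
    rw [Tgt] at hmem
    obtain ⟨j, hjS, hjF, -⟩ := by
      simpa only [Set.mem_iUnion, Set.mem_inter_iff, Set.mem_setOf_eq, exists_prop] using hmem
    exact hnotF n j hjS hjF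
  -- one step of the measure argument
  have step : ∀ n, (remS F (hist π (n + 1))).Nonempty →
      π n ∈ Attr A (Tgt A F (remS F (hist π n))) →
      π (n + 1) ∈ Attr A (Tgt A F (remS F (hist π (n + 1)))) ∧
        ((remS F (hist π (n + 1))).card - 1) * Fintype.card V +
          rk A (Tgt A F (remS F (hist π (n + 1)))) (π (n + 1)) + 1 ≤
        ((remS F (hist π n)).card - 1) * Fintype.card V +
          rk A (Tgt A F (remS F (hist π n))) (π n) := by
    intro n hne hinv
    have hr_mem := mem_attrSeq_rk A hinv
    have hr1 : 1 ≤ rk A (Tgt A F (remS F (hist π n))) (π n) := rk_pos A hinv (hnotTgt n)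
    have hrpred := not_mem_attrSeq_pred A hr1
    have hstep1 : π (n + 1) ∈ AttrSeq A (Tgt A F (remS F (hist π n)))
        (rk A (Tgt A F (remS F (hist π n))) (π n) - 1) := by
      have hsum : π n ∈ AttrStep A (AttrSeq A (Tgt A F (remS F (hist π n)))
          (rk A (Tgt A F (remS F (hist π n))) (π n) - 1)) := by
        have he : rk A (Tgt A F (remS F (hist π n))) (π n) =
            (rk A (Tgt A F (remS F (hist π n))) (π n) - 1) + 1 := by omega
        rw [he] at hr_mem
        exact hr_mem
      by_cases he : A.eve (π n)
      · have hex : ∃ w', A.E (π n) w' ∧ w' ∈ AttrSeq A (Tgt A F (remS F (hist π n)))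
            (rk A (Tgt A F (remS F (hist π n))) (π n) - 1) := by
          rcases hsum with (h' | h') | h'
          · exact absurd h' hrpred
          · exact h'.2
          · exact absurd he h'.1
        have hmove := hc n he
        have hlast : (hist π n).getLast?.getD v0 = π n := by rw [hist_getLast?]; rfl
        rw [hmove]
        unfold sstar
        rw [hlast]
        exact pick_spec A (π n) _ hex
      · rcases hsum with (h' | h') | h'
        · exact absurd h' hrpred
        · exact absurd h'.1 he
        · exact h'.2 (π (n + 1)) (hπ.2 n)
    by_cases heq : remS F (hist π (n + 1)) = remS F (hist π n)
    · rw [heq]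
      refine ⟨attrSeq_subset_attr A _ _ hstep1, ?_⟩
      have hrk1 : rk A (Tgt A F (remS F (hist π n))) (π (n + 1)) ≤
          rk A (Tgt A F (remS F (hist π n))) (π n) - 1 := rk_le A hstep1
      omega
    · have hlt : remS F (hist π (n + 1)) ⊂ remS F (hist π n) :=
        ssubset_of_subset_of_ne (hsub n) heq
      have hcard : (remS F (hist π (n + 1))).card < (remS F (hist π n)).card :=
        Finset.card_lt_card hlt
      have hinv' : π (n + 1) ∈ Attr A (Tgt A F (remS F (hist π (n + 1)))) :=
        attr_tgt_anti A F (hsub n) hne (attrSeq_subset_attr A _ _ hstep1)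
      refine ⟨hinv', ?_⟩
      have hrk' : rk A (Tgt A F (remS F (hist π (n + 1)))) (π (n + 1)) ≤ Fintype.card V :=
        rk_le_card A hinv'
      have hc1 : 1 ≤ (remS F (hist π (n + 1))).card := Finset.card_pos.mpr hne
      have hmul : ((remS F (hist π (n + 1))).card - 1) * Fintype.card V + Fintype.card V =
          (remS F (hist π (n + 1))).card * Fintype.card V := by
        rw [← Nat.succ_mul]
        congr 1
        omega
      have hmul2 : (remS F (hist π (n + 1))).card * Fintype.card V ≤
          ((remS F (hist π n)).card - 1) * Fintype.card V :=
        Nat.mul_le_mul_right _ (by omega)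
      omega
  -- the chained invariant
  have main : ∀ n, (remS F (hist π n)).Nonempty →
      π n ∈ Attr A (Tgt A F (remS F (hist π n))) ∧
        n + (((remS F (hist π n)).card - 1) * Fintype.card V +
          rk A (Tgt A F (remS F (hist π n))) (π n)) ≤
        ((remS F (hist π 0)).card - 1) * Fintype.card V +
          rk A (Tgt A F (remS F (hist π 0))) (π 0) := by
    intro n
    induction n with
    | zero =>
        intro hne
        have hwin : WinS A F (remS F (hist π 0)) (π 0) := by
          rw [hπ.1]
          exact winS_anti A F (Finset.subset_univ _) hwin0
        exact ⟨progress A F hne hwin, by omega⟩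
    | succ n ih =>
        intro hne
        have hne' : (remS F (hist π n)).Nonempty := by
          obtain ⟨j, hj⟩ := hne
          exact ⟨j, hsub n hj⟩
        obtain ⟨hinv, hbound⟩ := ih hne'
        obtain ⟨hinv', hdec⟩ := step n hne hinv
        exact ⟨hinv', by omega⟩
  -- the remaining set is empty at time `card V * k`
  have hSN : remS F (hist π (Fintype.card V * k)) = ∅ := by
    by_contra hne
    have hne' : (remS F (hist π (Fintype.card V * k))).Nonempty :=
      Finset.nonempty_iff_ne_empty.mpr hne
    obtain ⟨hinv, hbound⟩ := main (Fintype.card V * k) hne'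
    have h1 : 1 ≤ rk A (Tgt A F (remS F (hist π (Fintype.card V * k))))
        (π (Fintype.card V * k)) := rk_pos A hinv (hnotTgt _)
    have hne0 : (remS F (hist π 0)).Nonempty := by
      obtain ⟨j, hj⟩ := hne'
      refine ⟨j, ?_⟩
      rw [mem_remS] at hj ⊢
      intro u hu
      obtain ⟨m, hm, rfl⟩ := mem_hist.mp hu
      exact hj (π m) (mem_hist.mpr ⟨m, Nat.le_zero.mp hm ▸ Nat.zero_le _, rfl⟩)
    obtain ⟨hinv0, -⟩ := main 0 hne0
    have hk0 : rk A (Tgt A F (remS F (hist π 0))) (π 0) ≤ Fintype.card V :=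
      rk_le_card A hinv0
    have hcard0 : (remS F (hist π 0)).card ≤ k := by
      have := Finset.card_le_univ (remS F (hist π 0))
      simpa using this
    have hk1 : 1 ≤ (remS F (hist π 0)).card := Finset.card_pos.mpr hne0
    have hmul : ((remS F (hist π 0)).card - 1) * Fintype.card V ≤
        (k - 1) * Fintype.card V := Nat.mul_le_mul_right _ (by omega)
    have hkk : 1 ≤ k := le_trans hk1 hcard0
    have hmul2 : (k - 1) * Fintype.card V + Fintype.card V = Fintype.card V * k := by
      rw [← Nat.succ_mul, show (k - 1).succ = k from by omega, Nat.mul_comm]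
    omega
  -- conclude
  have hi : i ∉ remS F (hist π (Fintype.card V * k)) := by
    rw [hSN]
    exact Finset.notMem_empty i
  rw [mem_remS] at hi
  push_neg at hi
  obtain ⟨u, hu, huF⟩ := hi
  obtain ⟨m, hm, rfl⟩ := mem_hist.mp hu
  exact ⟨m, hm, huF⟩
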